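/- A countable group G is left-orderable if and only if there exists an injective group homomorphism from G into the group of orientation-preserving homeomorphisms of ℝ (equivalently, the group of strictly increasing bijections ℝ → ℝ). -/

import Mathlib

open Set Function

/-! ### Extension of order isomorphisms of `ℚ` to `ℝ` -/

noncomputable def ratExtFun (f : ℚ → ℚ) (x : ℝ) : ℝ :=
  sSup ((fun q : ℚ => (f q : ℝ)) '' {q : ℚ | (q : ℝ) < x})

lemma ratExtFun_set_nonempty (f : ℚ → ℚ) (x : ℝ) :
    ((fun q : ℚ => (f q : ℝ)) '' {q : ℚ | (q : ℝ) < x}).Nonempty := by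
  obtain ⟨q, hq⟩ := exists_rat_lt x
  exact ⟨f q, ⟨q, hq, rfl⟩⟩

lemma ratExtFun_bddAbove {f : ℚ → ℚ} (hf : Monotone f) (x : ℝ) :
    BddAbove ((fun q : ℚ => (f q : ℝ)) '' {q : ℚ | (q : ℝ) < x}) := by
  obtain ⟨r, hr⟩ := exists_rat_gt x
  refine ⟨(f r : ℝ), ?_⟩
  rintro y ⟨q, hq, rfl⟩
  have hqr : q ≤ r := by exact_mod_cast (lt_trans (show (q:ℝ) < x from hq) hr).le
  show ((f q : ℚ) : ℝ) ≤ ((f r : ℚ) : ℝ)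
  exact_mod_cast hf hqr

lemma le_ratExtFun {f : ℚ → ℚ} (hf : Monotone f) {q : ℚ} {x : ℝ} (h : (q : ℝ) < x) :
    (f q : ℝ) ≤ ratExtFun f x :=
  le_csSup (ratExtFun_bddAbove hf x) ⟨q, h, rfl⟩

lemma ratExtFun_le {f : ℚ → ℚ} {x b : ℝ} (h : ∀ q : ℚ, (q : ℝ) < x → (f q : ℝ) ≤ b) :
    ratExtFun f x ≤ b :=
  csSup_le (ratExtFun_set_nonempty f x) (by rintro y ⟨q, hq, rfl⟩; exact h q hq)

lemma ratExtFun_id (x : ℝ) : ratExtFun id x = x := by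
  refine le_antisymm (ratExtFun_le fun q hq => le_of_lt hq) ?_
  refine le_of_forall_lt fun c hc => ?_
  obtain ⟨q, h1, h2⟩ := exists_rat_btwn hc
  exact h1.trans_le (le_ratExtFun monotone_id h2)

lemma ratExtFun_mono {f : ℚ → ℚ} (hf : Monotone f) : Monotone (ratExtFun f) := by
  intro x y hxy
  exact ratExtFun_le fun q hq => le_ratExtFun hf (lt_of_lt_of_le hq hxy)

lemma ratExtFun_rat (f : ℚ ≃o ℚ) (q : ℚ) : ratExtFun f (q : ℝ) = (f q : ℝ) := by
  refine le_antisymm (ratExtFun_le fun p hp => ?_) ?_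
  · have : p ≤ q := by exact_mod_cast hp.le
    exact_mod_cast f.monotone this
  · refine le_of_forall_lt fun c hc => ?_
    obtain ⟨p', h1, h2⟩ := exists_rat_btwn hc
    have hp' : p' < f q := by exact_mod_cast h2
    have hs : ((f.symm p' : ℚ) : ℝ) < (q : ℝ) := by
      exact_mod_cast (f.symm.strictMono hp').trans_eq (f.symm_apply_apply q)
    have := le_ratExtFun f.monotone hs
    rw [f.apply_symm_apply] at this
    exact h1.trans_le this

lemma ratExtFun_comp (f g : ℚ ≃o ℚ) (x : ℝ) :
    ratExtFun f (ratExtFun g x) = ratExtFun (fun q => f (g q)) x := by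
  have hfg : Monotone fun q => f (g q) := f.monotone.comp g.monotone
  refine le_antisymm (ratExtFun_le fun q hq => ?_) (ratExtFun_le fun p hp => ?_)
  · obtain ⟨y, ⟨p, hp, rfl⟩, hqy⟩ := exists_lt_of_lt_csSup (ratExtFun_set_nonempty g x) hq
    have hqy' : (q : ℝ) < ((g p : ℚ) : ℝ) := hqy
    have hq' : q ≤ g p := by exact_mod_cast hqy'.le
    calc (f q : ℝ) ≤ (f (g p) : ℝ) := by exact_mod_cast f.monotone hq'
    _ ≤ ratExtFun (fun q => f (g q)) x := le_ratExtFun hfg hp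
  · obtain ⟨p', h1, h2⟩ := exists_rat_btwn hp
    have hpp' : p < p' := by exact_mod_cast h1
    have h3 : ((g p : ℚ) : ℝ) < ratExtFun g x :=
      lt_of_lt_of_le (by exact_mod_cast g.strictMono hpp') (le_ratExtFun g.monotone h2)
    exact le_ratExtFun f.monotone h3

lemma ratExtFun_symm_apply (f : ℚ ≃o ℚ) (x : ℝ) :
    ratExtFun f.symm (ratExtFun f x) = x := by
  rw [ratExtFun_comp f.symm f x]
  have : (fun q : ℚ => f.symm (f q)) = id := funext fun q => f.symm_apply_apply q
  rw [this, ratExtFun_id]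

/-- Extension of an order isomorphism of `ℚ` to one of `ℝ`. -/
noncomputable def ratExtIso (f : ℚ ≃o ℚ) : ℝ ≃o ℝ where
  toFun := ratExtFun f
  invFun := ratExtFun f.symm
  left_inv x := ratExtFun_symm_apply f x
  right_inv x := by simpa using ratExtFun_symm_apply f.symm x
  map_rel_iff' {a b} := by
    constructor
    · intro h
      have h3 : ratExtFun (⇑f.symm) (ratExtFun (⇑f) a) ≤ ratExtFun (⇑f.symm) (ratExtFun (⇑f) b) :=
        ratExtFun_mono f.symm.monotone h
      rwa [ratExtFun_symm_apply, ratExtFun_symm_apply] at h3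
    · exact fun h => ratExtFun_mono f.monotone h

/-- The extension, as a group homomorphism. -/
noncomputable def ratExtHom : (ℚ ≃o ℚ) →* (ℝ ≃o ℝ) where
  toFun := ratExtIso
  map_one' := RelIso.ext fun x => ratExtFun_id x
  map_mul' f g := RelIso.ext fun x => (ratExtFun_comp f g x).symm

lemma ratExtHom_injective : Function.Injective ratExtHom := by
  rw [injective_iff_map_eq_one]
  intro f hf
  refine RelIso.ext fun q => ?_
  have h1 : ratExtFun (⇑f) ((q : ℝ)) = ((f q : ℚ) : ℝ) := ratExtFun_rat f q
  have h2 : ratExtIso f = 1 := hf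
  have h3 : ratExtIso f ((q : ℝ)) = ((q : ℚ) : ℝ) := by rw [h2]; rfl
  have : ((f q : ℚ) : ℝ) = ((q : ℚ) : ℝ) := by rw [← h1]; exact h3
  exact_mod_cast this

/-- Conjugation of order isomorphism groups by an order isomorphism. -/
def conjOrderIsoHom {α β : Type*} [Preorder α] [Preorder β] (e : α ≃o β) :
    (α ≃o α) →* (β ≃o β) where
  toFun f := (e.symm.trans f).trans e
  map_one' := RelIso.ext fun x => by
    simp [OrderIso.trans_apply, RelIso.coe_one]
  map_mul' f g := RelIso.ext fun x => by
    simp [OrderIso.trans_apply, RelIso.mul_apply]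

lemma conjOrderIsoHom_injective {α β : Type*} [Preorder α] [Preorder β] (e : α ≃o β) :
    Function.Injective (conjOrderIsoHom e) := by
  intro f g h
  refine RelIso.ext fun x => ?_
  have := DFunLike.congr_fun h (e x)
  simp only [conjOrderIsoHom, MonoidHom.coe_mk, OneHom.coe_mk, OrderIso.trans_apply,
    OrderIso.symm_apply_apply] at this
  exact e.injective this

/-- Two order isomorphisms of `ℝ` agreeing on the rationals are equal. -/
lemma orderIso_real_eq_of_rat {f g : ℝ ≃o ℝ} (h : ∀ q : ℚ, f q = g q) : f = g := by
  have key : ∀ (f g : ℝ ≃o ℝ), (∀ q : ℚ, f q = g q) → ∀ x, f x ≤ g x := by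
    intro f g h x
    by_contra hlt
    push_neg at hlt
    have h1 : f.symm (g x) < x := by
      rw [← f.lt_iff_lt, f.apply_symm_apply]; exact hlt
    obtain ⟨q, hq1, hq2⟩ := exists_rat_btwn h1
    have h2 : g x < f q := by
      have := f.strictMono hq1
      rwa [f.apply_symm_apply] at this
    rw [h q] at h2
    have := g.lt_iff_lt.1 h2
    exact absurd hq2 (not_lt.2 this.le)
  exact RelIso.ext fun x => le_antisymm (key f g h x) (key g f (fun q => (h q).symm) x)

/-- A left order on a group `G`: a strict linear order invariant under left multiplication. -/
structure IsLeftOrder {G : Type*} [Group G] (r : G → G → Prop) : Prop where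
  irrefl : ∀ x, ¬ r x x
  trans : ∀ x y z, r x y → r y z → r x z
  total : ∀ x y, x ≠ y → r x y ∨ r y x
  mul_left : ∀ x y z, r x y → r (z * x) (z * y)

/-- A countable group is left-orderable iff it embeds into the group `ℝ ≃o ℝ` of
orientation-preserving homeomorphisms (strictly increasing bijections) of the real line. -/
theorem countable_leftOrderable_iff_embeds_in_homeoPlus {G : Type*} [Group G] [Countable G] :
    (∃ r : G → G → Prop, IsLeftOrder r) ↔
      ∃ ρ : G →* (ℝ ≃o ℝ), Function.Injective ρ := by
  constructor
  · rintro ⟨r, hr⟩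
    haveI : IsIrrefl G r := ⟨hr.irrefl⟩
    haveI : IsTrans G r := ⟨fun a b c => hr.trans a b c⟩
    haveI : IsTrichotomous G r := ⟨fun a b => by
      rcases eq_or_ne a b with h | h
      · exact fun _ _ => h
      · rcases hr.total a b h with h' | h'
        · exact fun h1 _ => absurd h' h1
        · exact fun _ h2 => absurd h' h2⟩
    haveI : IsStrictTotalOrder G r := {}
    letI : DecidableRel r := Classical.decRel r
    letI : LinearOrder G := linearOrderOfSTO r
    have hlt : ∀ a b : G, a < b ↔ r a b := fun a b => Iff.rfl
    have hmul : ∀ (z : G) (a b : G), z * a < z * b ↔ a < b := by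
      intro z a b
      constructor
      · intro h
        have := hr.mul_left _ _ z⁻¹ ((hlt _ _).1 h)
        rwa [inv_mul_cancel_left, inv_mul_cancel_left] at this
      · exact fun h => (hlt _ _).2 (hr.mul_left _ _ z ((hlt _ _).1 h))
    -- instances on the lex product
    haveI : Countable (G ×ₗ ℚ) := Countable.of_equiv (G × ℚ) toLex
    haveI : Nonempty (G ×ₗ ℚ) := ⟨toLex (1, 0)⟩
    haveI : DenselyOrdered (G ×ₗ ℚ) := by
      constructor
      rintro a b hab
      rcases Prod.Lex.lt_iff.1 hab with h | ⟨h1, h2⟩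
      · refine ⟨toLex ((ofLex a).1, (ofLex a).2 + 1), ?_, ?_⟩
        · exact Prod.Lex.lt_iff.2 (Or.inr ⟨rfl, lt_add_one _⟩)
        · exact Prod.Lex.lt_iff.2 (Or.inl h)
      · obtain ⟨m, hm1, hm2⟩ := exists_between h2
        refine ⟨toLex ((ofLex a).1, m), ?_, ?_⟩
        · exact Prod.Lex.lt_iff.2 (Or.inr ⟨rfl, hm1⟩)
        · exact Prod.Lex.lt_iff.2 (Or.inr ⟨h1, hm2⟩)
    obtain ⟨e⟩ : Nonempty ((G ×ₗ ℚ) ≃o ℚ) := Order.iso_of_countable_dense (G ×ₗ ℚ) ℚ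
    -- the action of G on the lex product
    let A : G →* ((G ×ₗ ℚ) ≃o (G ×ₗ ℚ)) :=
      { toFun := fun g =>
          { toFun := fun p => toLex (g * (ofLex p).1, (ofLex p).2)
            invFun := fun p => toLex (g⁻¹ * (ofLex p).1, (ofLex p).2)
            left_inv := fun p => by
              show toLex (g⁻¹ * (g * (ofLex p).1), (ofLex p).2) = p
              simp
            right_inv := fun p => by
              show toLex (g * (g⁻¹ * (ofLex p).1), (ofLex p).2) = p
              simp
            map_rel_iff' := @fun a b => by
              constructor
              · intro h
                rcases Prod.Lex.le_iff.1 h with h' | ⟨h1, h2⟩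
                · exact Prod.Lex.le_iff.2 (Or.inl ((hmul g _ _).1 h'))
                · exact Prod.Lex.le_iff.2
                    (Or.inr ⟨mul_left_cancel h1, h2⟩)
              · intro h
                rcases Prod.Lex.le_iff.1 h with h' | ⟨h1, h2⟩
                · exact Prod.Lex.le_iff.2 (Or.inl ((hmul g _ _).2 h'))
                · exact Prod.Lex.le_iff.2 (Or.inr ⟨by show g * (ofLex a).1 = g * (ofLex b).1; rw [h1], h2⟩) }
        map_one' := RelIso.ext fun p => by
          show toLex ((1 : G) * (ofLex p).1, (ofLex p).2) = p
          simp
        map_mul' := fun g h => RelIso.ext fun p => by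
          show toLex (g * h * (ofLex p).1, (ofLex p).2)
              = toLex (g * (h * (ofLex p).1), (ofLex p).2)
          rw [mul_assoc] }
    have hA : Function.Injective A := by
      intro g h hgh
      have h2 : toLex (g * (1 : G), (0 : ℚ)) = toLex (h * 1, 0) :=
        DFunLike.congr_fun hgh (toLex ((1 : G), (0 : ℚ)))
      have h3 := congrArg (fun p => (ofLex p).1) h2
      simpa using h3
    refine ⟨ratExtHom.comp ((conjOrderIsoHom e).comp A), ?_⟩
    exact ratExtHom_injective.comp ((conjOrderIsoHom_injective e).comp hA)
  · rintro ⟨ρ, hρ⟩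
    obtain ⟨en, hen⟩ := exists_surjective_nat ℚ
    refine ⟨fun g h => ∃ n : ℕ, (∀ m, m < n → ρ g ((en m : ℚ) : ℝ) = ρ h ((en m : ℚ) : ℝ)) ∧
      ρ g ((en n : ℚ) : ℝ) < ρ h ((en n : ℚ) : ℝ), ?_, ?_, ?_, ?_⟩
    · rintro x ⟨n, -, hn⟩
      exact lt_irrefl _ hn
    · rintro x y z ⟨n1, e1, l1⟩ ⟨n2, e2, l2⟩
      rcases lt_trichotomy n1 n2 with h | h | h
      · exact ⟨n1, fun m hm => (e1 m hm).trans (e2 m (hm.trans h)),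
          l1.trans_eq (e2 n1 h)⟩
      · subst h
        exact ⟨n1, fun m hm => (e1 m hm).trans (e2 m hm), l1.trans l2⟩
      · exact ⟨n2, fun m hm => (e1 m (hm.trans h)).trans (e2 m hm),
          (e1 n2 h).trans_lt l2⟩
    · intro x y hxy
      have hfg : ρ x ≠ ρ y := fun h => hxy (hρ h)
      have hex : ∃ n, ρ x ((en n : ℚ) : ℝ) ≠ ρ y ((en n : ℚ) : ℝ) := by
        by_contra hc
        push_neg at hc
        refine hfg (orderIso_real_eq_of_rat fun q => ?_)
        obtain ⟨n, rfl⟩ := hen q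
        exact hc n
      have hmin : ∀ m, m < Nat.find hex → ρ x ((en m : ℚ) : ℝ) = ρ y ((en m : ℚ) : ℝ) :=
        fun m hm => not_not.1 (Nat.find_min hex hm)
      rcases lt_or_gt_of_ne (Nat.find_spec hex) with h | h
      · exact Or.inl ⟨Nat.find hex, hmin, h⟩
      · exact Or.inr ⟨Nat.find hex, fun m hm => (hmin m hm).symm, h⟩
    · rintro x y z ⟨n, he, hl⟩
      refine ⟨n, fun m hm => ?_, ?_⟩
      · rw [map_mul, map_mul, RelIso.mul_apply, RelIso.mul_apply, he m hm]
      · rw [map_mul, map_mul, RelIso.mul_apply, RelIso.mul_apply]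
        exact (ρ z).lt_iff_lt.2 hl
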